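/- Define the Scott rank of a countable linear order L as follows: for a finite increasing tuple ā in L, let r_L(ā) be the least ordinal α such that every tuple b̄ in L with (L, ā) ≤_α (L, b̄) is in the same automorphism orbit as ā; and let SR(L) be the least ordinal strictly greater than r_L(ā) for all finite tuples ā. Theorem: for linear orders A and B, max{SR(A), SR(B)} ≤ SR(A + 1 + B) ≤ max{SR(A), SR(B)} + 3. -/

import Mathlib

/-- The standard back-and-forth relation between tuples in linear orders, defined by
transfinite recursion: `bfT 0` holds iff the tuples satisfy the same atomic formulas;
`bfT ξ L M a b` iff the tuples satisfy the same atomic formulas and for every `γ < ξ`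
and every tuple `d` in `M` there is a tuple `c` in `L` with `bfT γ M L (b ++ d) (a ++ c)`. -/
def bfT (ξ : Ordinal) (L : Type) [LinearOrder L] (M : Type) [LinearOrder M]
    {k : ℕ} (a : Fin k → L) (b : Fin k → M) : Prop :=
  (∀ i j, a i ≤ a j ↔ b i ≤ b j) ∧
  ∀ γ < ξ, ∀ (l : ℕ) (d : Fin l → M), ∃ c : Fin l → L,
    bfT γ M L (Fin.append b d) (Fin.append a c)
termination_by ξ

universe uu


section Helpers

variable {X Y : Type} {j k l m n : ℕ}

lemma comp_append (f : X → Y) (u : Fin k → X) (v : Fin l → X) :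
    f ∘ (Fin.append u v) = Fin.append (f ∘ u) (f ∘ v) := by
  funext i
  refine Fin.addCases (fun i₀ => ?_) (fun i₀ => ?_) i <;>
    simp [Fin.append_left, Fin.append_right]

def sigmaExt (σ : Fin j → Fin k) (l : ℕ) : Fin (j + l) → Fin (k + l) :=
  fun i => Fin.addCases (fun i₀ => Fin.castAdd l (σ i₀)) (fun i₀ => Fin.natAdd k i₀) i

lemma append_comp_sigmaExt (u : Fin k → X) (v : Fin l → X) (σ : Fin j → Fin k) :
    (Fin.append u v) ∘ (sigmaExt σ l) = Fin.append (u ∘ σ) v := by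
  funext i
  refine Fin.addCases (fun i₀ => ?_) (fun i₀ => ?_) i <;>
    simp [sigmaExt, Fin.append_left, Fin.append_right]

lemma comp_cast_eq (u : Fin k → X) (e : k + 0 = k) : u ∘ Fin.cast e.symm = u := by
  funext i; rfl

lemma snoc_eq_append (u : Fin k → X) (x : X) :
    Fin.snoc u x = Fin.append u (fun _ : Fin 1 => x) := by
  funext i
  refine Fin.lastCases ?_ (fun i₀ => ?_) i
  · have e2 : Fin.append u (fun _ : Fin 1 => x) (Fin.last k) = x := by
      rw [show (Fin.last k : Fin (k+1)) = Fin.natAdd k 0 from by ext; simp [Fin.last]]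
      exact Fin.append_right u _ 0
    rw [Fin.snoc_last, e2]
  · rw [Fin.snoc_castSucc]
    exact (Fin.append_left u _ i₀).symm

lemma snoc_eta (f : Fin (k+1) → X) :
    Fin.snoc (f ∘ Fin.castSucc) (f (Fin.last k)) = f := by
  funext i
  refine Fin.lastCases ?_ (fun i₀ => ?_) i <;> simp

end Helpers

section Basic

variable {L M N L' M' : Type} [LinearOrder L] [LinearOrder M] [LinearOrder N]
  [LinearOrder L'] [LinearOrder M'] {k l : ℕ}

lemma bfT_atomic {α : Ordinal} {a : Fin k → L} {b : Fin k → M}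
    (h : bfT α L M a b) : ∀ i j, a i ≤ a j ↔ b i ≤ b j := by
  rw [bfT] at h; exact h.1

lemma bfT_challenge {α γ : Ordinal} {a : Fin k → L} {b : Fin k → M}
    (h : bfT α L M a b) (hγ : γ < α) (d : Fin l → M) :
    ∃ c : Fin l → L, bfT γ M L (Fin.append b d) (Fin.append a c) := by
  rw [bfT] at h; exact h.2 γ hγ l d

lemma bfT_intro {α : Ordinal} {a : Fin k → L} {b : Fin k → M}
    (h1 : ∀ i j, a i ≤ a j ↔ b i ≤ b j)
    (h2 : ∀ γ < α, ∀ (l : ℕ) (d : Fin l → M), ∃ c : Fin l → L,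
      bfT γ M L (Fin.append b d) (Fin.append a c)) : bfT α L M a b := by
  rw [bfT]; exact ⟨h1, h2⟩

lemma bfT_mono {α β : Ordinal} (hle : β ≤ α) {a : Fin k → L} {b : Fin k → M}
    (h : bfT α L M a b) : bfT β L M a b := by
  rw [bfT] at h ⊢
  exact ⟨h.1, fun γ hγ => h.2 γ (lt_of_lt_of_le hγ hle)⟩

end Basic

lemma bfT_reindex : ∀ {α : Ordinal} {L M : Type} [LinearOrder L] [LinearOrder M]
    {k j : ℕ} {a : Fin k → L} {b : Fin k → M}
    (σ : Fin j → Fin k), bfT α L M a b → bfT α L M (a ∘ σ) (b ∘ σ) := by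
  intro α
  induction α using Ordinal.induction with
  | _ α IH =>
    intro L M _ _ k j a b σ h
    rw [bfT] at h ⊢
    refine ⟨fun i j => h.1 (σ i) (σ j), fun γ hγ l d => ?_⟩
    obtain ⟨c, hc⟩ := h.2 γ hγ l d
    refine ⟨c, ?_⟩
    have := IH γ hγ (σ := sigmaExt σ l) hc
    rwa [append_comp_sigmaExt, append_comp_sigmaExt] at this

lemma bfT_trans : ∀ {α : Ordinal} {L M N : Type}
    [LinearOrder L] [LinearOrder M] [LinearOrder N] {k : ℕ}
    {a : Fin k → L} {b : Fin k → M} {c : Fin k → N},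
    bfT α L M a b → bfT α M N b c → bfT α L N a c := by
  intro α
  induction α using Ordinal.induction with
  | _ α IH =>
    intro L M N _ _ _ k a b c h1 h2
    refine bfT_intro (fun i j => (bfT_atomic h1 i j).trans (bfT_atomic h2 i j))
      (fun γ hγ l d => ?_)
    obtain ⟨e, he⟩ := bfT_challenge h2 hγ d
    obtain ⟨f, hf⟩ := bfT_challenge h1 hγ e
    exact ⟨f, IH γ hγ he hf⟩

lemma bfT_refl : ∀ {α : Ordinal} {L : Type} [LinearOrder L] {k : ℕ}
    (a : Fin k → L), bfT α L L a a := by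
  intro α
  induction α using Ordinal.induction with
  | _ α IH =>
    intro L _ k a
    exact bfT_intro (fun i j => Iff.rfl)
      (fun γ hγ l d => ⟨d, IH γ hγ _⟩)

lemma bfT_congr : ∀ {α : Ordinal} {L M L' M' : Type}
    [LinearOrder L] [LinearOrder M] [LinearOrder L'] [LinearOrder M'] {k : ℕ}
    {a : Fin k → L} {b : Fin k → M} (f : L ≃o L') (g : M ≃o M'),
    bfT α L M a b → bfT α L' M' (f ∘ a) (g ∘ b) := by
  intro α
  induction α using Ordinal.induction with
  | _ α IH =>
    intro L M L' M' _ _ _ _ k a b f g h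
    refine bfT_intro (fun i j => ?_) (fun γ hγ l d => ?_)
    · simpa using bfT_atomic h i j
    · obtain ⟨c, hc⟩ := bfT_challenge h hγ (fun i => g.symm (d i))
      refine ⟨f ∘ c, ?_⟩
      have := IH γ hγ g f hc
      rw [comp_append, comp_append] at this
      have e : (g ∘ fun i => g.symm (d i)) = d := by funext i; simp
      rwa [e] at this

lemma bfT_swap {α γ : Ordinal} {L M : Type} [LinearOrder L] [LinearOrder M]
    {k : ℕ} {a : Fin k → L} {b : Fin k → M} (h : bfT α L M a b) (hγ : γ < α) :
    bfT γ M L b a := by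
  obtain ⟨c, hc⟩ := bfT_challenge h hγ (Fin.elim0 : Fin 0 → M)
  have hc0 : c = Fin.elim0 := by funext i; exact i.elim0
  rw [hc0, Fin.append_elim0, Fin.append_elim0] at hc
  exact hc

lemma bfT_auto {α : Ordinal} {L : Type} [LinearOrder L] {k : ℕ}
    {a b : Fin k → L} (g : L ≃o L) (hg : ∀ i, g (a i) = b i) :
    bfT α L L a b := by
  have := bfT_congr (α := α) (OrderIso.refl L) g (bfT_refl a)
  have e : (g ∘ a) = b := funext hg
  simpa [e] using this

/-- `rk L a` is the least ordinal `α` such that every tuple `b` with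
`(L, a) ≤_α (L, b)` is automorphic to `a`. -/
noncomputable def rk (L : Type) [LinearOrder L] {k : ℕ} (a : Fin k → L) : Ordinal :=
  sInf {α | ∀ b : Fin k → L, bfT α L L a b → ∃ f : L ≃o L, ∀ i, f (a i) = b i}

/-- The Scott rank of a linear order: the least ordinal strictly greater than
`rk L a` for every finite tuple `a` in `L`. -/
noncomputable def scottRank (L : Type) [LinearOrder L] : Ordinal :=
  sInf {α | ∀ (k : ℕ) (a : Fin k → L), rk L a < α}


section Stab

lemma bfT_snoc_challenge {α γ : Ordinal} {L M : Type} [LinearOrder L] [LinearOrder M]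
    {k : ℕ} {a : Fin k → L} {b : Fin k → M} (h : bfT α L M a b) (hγ : γ < α) (y : M) :
    ∃ x : L, bfT γ M L (Fin.snoc b y) (Fin.snoc a x) := by
  obtain ⟨c, hc⟩ := bfT_challenge h hγ (fun _ : Fin 1 => y)
  refine ⟨c 0, ?_⟩
  have hc0 : c = fun _ : Fin 1 => c 0 := by
    funext i; rw [Subsingleton.elim i 0]
  rw [snoc_eq_append, snoc_eq_append]
  rwa [hc0] at hc

lemma bfT_stab (L M : Type) [LinearOrder L] [LinearOrder M] :
    ∃ α : Ordinal.{uu}, ∀ (k : ℕ) (a : Fin k → L) (b : Fin k → M),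
      bfT α L M a b → ∀ β : Ordinal.{uu}, bfT β L M a b := by
  classical
  set F : (Σ k : ℕ, (Fin k → L) × (Fin k → M)) → Ordinal :=
    fun p => sInf {β | ¬ bfT β L M p.2.1 p.2.2} with hF
  refine ⟨iSup F, fun k a b h β => ?_⟩
  by_contra hβ
  have hne : {β | ¬ bfT β L M a b}.Nonempty := ⟨β, hβ⟩
  have hmem : ¬ bfT (F ⟨k, (a, b)⟩) L M a b := by
    simp only [hF]
    have := csInf_mem hne
    rwa [Set.mem_setOf_eq] at this
  have hle : F ⟨k, (a, b)⟩ ≤ iSup F := le_ciSup (Ordinal.bddAbove_range F) _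
  exact hmem (bfT_mono hle h)

end Stab

section Generic

variable {M N : Type} [LinearOrder M] [LinearOrder N]

variable (Rel : ∀ k : ℕ, (Fin k → M) → (Fin k → N) → Prop)
  (hforth : ∀ k a b, Rel k a b → ∀ x : M, ∃ y : N, Rel (k+1) (Fin.snoc a x) (Fin.snoc b y))
  (hback : ∀ k a b, Rel k a b → ∀ y : N, ∃ x : M, Rel (k+1) (Fin.snoc a x) (Fin.snoc b y))
  (eM : ℕ → M) (eN : ℕ → N)
  (k0 : ℕ) (s : Fin k0 → M) (t : Fin k0 → N) (hst : Rel k0 s t)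

private noncomputable def bfSeq :
    (n : ℕ) → {p : (Fin (k0+n) → M) × (Fin (k0+n) → N) // Rel (k0+n) p.1 p.2}
  | 0 => ⟨⟨s, t⟩, hst⟩
  | n+1 =>
    let p := bfSeq n
    if hpar : n % 2 = 0 then
      ⟨⟨Fin.snoc p.1.1 (eM (n/2)),
        Fin.snoc p.1.2 (Classical.choose (hforth _ _ _ p.2 (eM (n/2))))⟩,
        Classical.choose_spec (hforth _ _ _ p.2 (eM (n/2)))⟩
    else
      ⟨⟨Fin.snoc p.1.1 (Classical.choose (hback _ _ _ p.2 (eN (n/2)))),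
        Fin.snoc p.1.2 (eN (n/2))⟩,
        Classical.choose_spec (hback _ _ _ p.2 (eN (n/2)))⟩

variable {Rel eM eN s t}

private lemma bfSeq_castSucc (n : ℕ) (i : Fin (k0 + n)) :
    (bfSeq Rel hforth hback eM eN k0 s t hst (n+1)).1.1 (Fin.castSucc i)
        = (bfSeq Rel hforth hback eM eN k0 s t hst n).1.1 i ∧
      (bfSeq Rel hforth hback eM eN k0 s t hst (n+1)).1.2 (Fin.castSucc i)
        = (bfSeq Rel hforth hback eM eN k0 s t hst n).1.2 i := by
  by_cases hpar : n % 2 = 0 <;> constructor <;> simp [bfSeq, hpar]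

private lemma bfSeq_last_even (n : ℕ) (hpar : n % 2 = 0) :
    (bfSeq Rel hforth hback eM eN k0 s t hst (n+1)).1.1 (Fin.last _) = eM (n/2) := by
  simp [bfSeq, hpar]

private lemma bfSeq_last_odd (n : ℕ) (hpar : ¬ (n % 2 = 0)) :
    (bfSeq Rel hforth hback eM eN k0 s t hst (n+1)).1.2 (Fin.last _) = eN (n/2) := by
  simp [bfSeq, hpar]

lemma bf_generic [Countable M] [Countable N]
    (Rel : ∀ k : ℕ, (Fin k → M) → (Fin k → N) → Prop)
    (hat : ∀ k a b, Rel k a b → ∀ i j, a i ≤ a j ↔ b i ≤ b j)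
    (hforth : ∀ k a b, Rel k a b → ∀ x : M, ∃ y : N, Rel (k+1) (Fin.snoc a x) (Fin.snoc b y))
    (hback : ∀ k a b, Rel k a b → ∀ y : N, ∃ x : M, Rel (k+1) (Fin.snoc a x) (Fin.snoc b y))
    {k0 : ℕ} {s : Fin k0 → M} {t : Fin k0 → N} (hst : Rel k0 s t) :
    ∃ f : M ≃o N, ∀ i, f (s i) = t i := by
  classical
  rcases isEmpty_or_nonempty M with hMe | hM
  · have hNe : IsEmpty N := by
      by_contra hN
      obtain ⟨y⟩ := not_isEmpty_iff.mp hN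
      obtain ⟨x, -⟩ := hback k0 s t hst y
      exact hMe.false x
    refine ⟨⟨Equiv.equivOfIsEmpty M N, ?_⟩, fun i => isEmptyElim (s i)⟩
    intro a b
    exact isEmptyElim a
  rcases isEmpty_or_nonempty N with hNe | hN
  · obtain ⟨x⟩ := hM
    obtain ⟨y, -⟩ := hforth k0 s t hst x
    exact isEmptyElim y
  obtain ⟨eM, heM⟩ := exists_surjective_nat M
  obtain ⟨eN, heN⟩ := exists_surjective_nat N
  let u := fun n => (bfSeq Rel hforth hback eM eN k0 s t hst n).1
  have hrel : ∀ n, Rel (k0+n) (u n).1 (u n).2 :=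
    fun n => (bfSeq Rel hforth hback eM eN k0 s t hst n).2
  let Mem : M → N → Prop := fun x y => ∃ n i, (u n).1 i = x ∧ (u n).2 i = y
  have hstep : ∀ n x y i, (u n).1 i = x → (u n).2 i = y →
      ∃ j, (u (n+1)).1 j = x ∧ (u (n+1)).2 j = y := by
    intro n x y i h1 h2
    obtain ⟨hz, hw⟩ := bfSeq_castSucc hforth hback k0 hst n i
    exact ⟨Fin.castSucc i, hz.trans h1, hw.trans h2⟩
  have hmono : ∀ n m x y, n ≤ m → (∃ i, (u n).1 i = x ∧ (u n).2 i = y) →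
      ∃ j, (u m).1 j = x ∧ (u m).2 j = y := by
    intro n m x y hnm
    induction m with
    | zero => intro h; exact (Nat.le_zero.mp hnm ▸ h)
    | succ m IH =>
      intro h
      rcases Nat.lt_or_ge n (m+1) with hlt | hge
      · obtain ⟨i, h1, h2⟩ := IH (Nat.lt_succ_iff.mp hlt) h
        exact hstep m x y i h1 h2
      · have he : n = m + 1 := le_antisymm hnm hge
        exact he ▸ h
  have horder : ∀ x1 y1 x2 y2, Mem x1 y1 → Mem x2 y2 → (x1 ≤ x2 ↔ y1 ≤ y2) := by
    rintro x1 y1 x2 y2 ⟨n1, i1, h1⟩ ⟨n2, i2, h2⟩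
    obtain ⟨j1, hj1, hj1'⟩ := hmono n1 (max n1 n2) x1 y1 (le_max_left _ _) ⟨i1, h1⟩
    obtain ⟨j2, hj2, hj2'⟩ := hmono n2 (max n1 n2) x2 y2 (le_max_right _ _) ⟨i2, h2⟩
    have := hat _ _ _ (hrel (max n1 n2)) j1 j2
    rw [hj1, hj2, hj1', hj2'] at this
    exact this
  have hfun : ∀ x y1 y2, Mem x y1 → Mem x y2 → y1 = y2 := by
    intro x y1 y2 h1 h2
    exact le_antisymm ((horder x y1 x y2 h1 h2).mp le_rfl)
      ((horder x y2 x y1 h2 h1).mp le_rfl)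
  have htotal : ∀ x, ∃ y, Mem x y := by
    intro x
    obtain ⟨m, hm⟩ := heM x
    refine ⟨(u (2*m+1)).2 (Fin.last _), 2*m+1, Fin.last _, ?_, rfl⟩
    show (u (2*m+1)).1 (Fin.last _) = x
    have hpar : (2*m) % 2 = 0 := by omega
    have hdiv : (2*m) / 2 = m := by omega
    show (bfSeq Rel hforth hback eM eN k0 s t hst (2*m+1)).1.1 _ = x
    rw [bfSeq_last_even hforth hback k0 hst (2*m) hpar, hdiv, hm]
  have hcototal : ∀ y, ∃ x, Mem x y := by
    intro y
    obtain ⟨m, hm⟩ := heN y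
    refine ⟨(u (2*m+2)).1 (Fin.last _), 2*m+2, Fin.last _, rfl, ?_⟩
    show (u (2*m+2)).2 (Fin.last _) = y
    have hpar : ¬ ((2*m+1) % 2 = 0) := by omega
    have hdiv : (2*m+1) / 2 = m := by omega
    show (bfSeq Rel hforth hback eM eN k0 s t hst (2*m+2)).1.2 _ = y
    rw [bfSeq_last_odd hforth hback k0 hst (2*m+1) hpar, hdiv, hm]
  let F : M → N := fun x => Classical.choose (htotal x)
  have hFMem : ∀ x, Mem x (F x) := fun x => Classical.choose_spec (htotal x)
  have hFeq : ∀ x y, Mem x y → F x = y := fun x y h => hfun x (F x) y (hFMem x) h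
  have hFord : ∀ x1 x2, x1 ≤ x2 ↔ F x1 ≤ F x2 :=
    fun x1 x2 => horder x1 (F x1) x2 (F x2) (hFMem x1) (hFMem x2)
  have hFmono : StrictMono F := by
    intro x1 x2 hx
    rcases lt_or_eq_of_le ((hFord x1 x2).mp hx.le) with h | h
    · exact h
    · exfalso
      have : x2 ≤ x1 := (hFord x2 x1).mpr (le_of_eq h.symm)
      exact absurd (le_antisymm hx.le this) hx.ne
  have hFsurj : Function.Surjective F := by
    intro y
    obtain ⟨x, hx⟩ := hcototal y
    exact ⟨x, hFeq x y hx⟩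
  refine ⟨StrictMono.orderIsoOfSurjective F hFmono hFsurj, fun i => ?_⟩
  show F (s i) = t i
  exact hFeq _ _ ⟨0, ⟨i, rfl, rfl⟩⟩

end Generic

section Scott

lemma ord_lt_succ (α : Ordinal.{uu}) : α < α + 1 := by
  rw [Ordinal.add_one_eq_succ]; exact Order.lt_succ α

lemma elim0_comp {X : Type} {k : ℕ} (s : Fin k → X) :
    s ∘ (Fin.elim0 : Fin 0 → Fin k) = Fin.elim0 := funext fun i => i.elim0

lemma elim0_append_comp {X : Type} {k : ℕ} (b : Fin k → X) :
    (Fin.append (Fin.elim0 : Fin 0 → X) b) ∘ (Fin.cast (Nat.zero_add k).symm) = b := by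
  funext i
  have h : Fin.cast (Nat.zero_add k).symm i = Fin.natAdd 0 i := by ext; simp
  simp only [Function.comp_apply]
  rw [h, Fin.append_right]

lemma snoc_comp_castSucc {X : Type} {k : ℕ} (v : Fin k → X) (y : X) :
    (Fin.snoc v y) ∘ Fin.castSucc = v := by
  funext i; simp

/-- From the empty-tuple relation at level `μ+1`, every tuple in `N` has a
level-`μ` partner in `M`. -/
lemma bfT_partner {M N : Type} [LinearOrder M] [LinearOrder N] {μ : Ordinal.{uu}}
    (H : bfT (μ+1) M N (Fin.elim0) (Fin.elim0)) (k : ℕ) (b : Fin k → N) :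
    ∃ a : Fin k → M, bfT μ N M b a := by
  obtain ⟨c, hc⟩ := bfT_challenge H (ord_lt_succ μ) b
  have := bfT_reindex (σ := Fin.cast (Nat.zero_add k).symm) hc
  rw [elim0_append_comp, elim0_append_comp] at this
  exact ⟨_, this⟩

/-- The key cross-structure isomorphism lemma: if every tuple of `M` has rank
function `R` below `μ` witnessing homogeneity of `M`, then a one-sided
back-and-forth relation at level `μ+1` between `(M,s)` and `(N,t)` yields an
isomorphism. -/
lemma cross_iso {M N : Type} [LinearOrder M] [LinearOrder N] [Countable M] [Countable N]
    {μ : Ordinal.{uu}} (R : ∀ k : ℕ, (Fin k → M) → Ordinal.{uu})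
    (hRlt : ∀ k u, R k u < μ)
    (hstar : ∀ (k : ℕ) (u v : Fin k → M), bfT (R k u) M M u v →
      ∃ g : M ≃o M, ∀ i, g (u i) = v i)
    {k0 : ℕ} {s : Fin k0 → M} {t : Fin k0 → N} (h : bfT (μ+1) M N s t) :
    ∃ f : M ≃o N, ∀ i, f (s i) = t i := by
  classical
  have H : bfT (μ+1) M N (Fin.elim0) (Fin.elim0) := by
    have := bfT_reindex (σ := (Fin.elim0 : Fin 0 → Fin k0)) h
    rwa [elim0_comp, elim0_comp] at this
  apply bf_generic (fun k u v => bfT (R k u) M N u v)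
    (fun k u v hr => bfT_atomic hr)
  · -- forth
    intro k u v hr x
    obtain ⟨a', ha'⟩ := bfT_partner H k v
    have h2 : bfT (R k u) M M u a' :=
      bfT_trans hr (bfT_mono (le_of_lt (hRlt k u)) ha')
    obtain ⟨g, hg⟩ := hstar k u a' h2
    obtain ⟨cf, hcf⟩ := bfT_challenge ha' (hRlt (k+1) (Fin.snoc u x)) (fun _ : Fin 1 => g x)
    refine ⟨cf 0, ?_⟩
    have hc0 : cf = fun _ : Fin 1 => cf 0 := by
      funext i; rw [Subsingleton.elim i 0]
    rw [hc0] at hcf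
    rw [← snoc_eq_append, ← snoc_eq_append] at hcf
    refine bfT_trans (bfT_auto g ?_) hcf
    intro i
    refine Fin.lastCases ?_ (fun i₀ => ?_) i <;> simp [hg]
  · -- back
    intro k u v hr y
    obtain ⟨w, hw⟩ := bfT_partner H (k+1) (Fin.snoc v y)
    have hw' : bfT μ N M v (w ∘ Fin.castSucc) := by
      have := bfT_reindex (σ := Fin.castSucc) hw
      rwa [snoc_comp_castSucc] at this
    have h2 : bfT (R k u) M M u (w ∘ Fin.castSucc) :=
      bfT_trans hr (bfT_mono (le_of_lt (hRlt k u)) hw')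
    obtain ⟨g, hg⟩ := hstar k u (w ∘ Fin.castSucc) h2
    refine ⟨g.symm (w (Fin.last k)), ?_⟩
    have hga : bfT μ M M w (Fin.snoc u (g.symm (w (Fin.last k)))) := by
      refine bfT_auto g.symm ?_
      intro i
      refine Fin.lastCases ?_ (fun i₀ => ?_) i
      · simp
      · have : g.symm (w (Fin.castSucc i₀)) = u i₀ := by
          have := hg i₀
          simp only [Function.comp_apply] at this
          rw [← this]; simp
        simp [this]
    exact bfT_swap (bfT_trans hw hga) (hRlt _ _)
  · -- init
    exact bfT_mono (le_of_lt (lt_trans (hRlt k0 s) (ord_lt_succ μ))) h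

/-- The set defining `rk`. -/
def rkSet (L : Type) [LinearOrder L] {k : ℕ} (a : Fin k → L) : Set Ordinal.{uu} :=
  {α | ∀ b : Fin k → L, bfT α L L a b → ∃ f : L ≃o L, ∀ i, f (a i) = b i}

lemma rkSet_nonempty (L : Type) [LinearOrder L] [Countable L] {k : ℕ} (a : Fin k → L) :
    (rkSet.{uu} L a).Nonempty := by
  obtain ⟨α, hα⟩ := bfT_stab.{uu} L L
  have symm : ∀ {k : ℕ} (u v : Fin k → L), bfT α L L u v → bfT α L L v u := by
    intro k u v h
    exact bfT_swap (hα _ _ _ h (α+1)) (ord_lt_succ α)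
  refine ⟨α, fun b hb => ?_⟩
  apply bf_generic (fun k (u v : Fin k → L) => bfT α L L u v)
    (fun k u v hr => bfT_atomic hr)
  · -- forth
    intro k u v hr x
    obtain ⟨z, hz⟩ := bfT_snoc_challenge (hα _ _ _ (symm u v hr) (α+1)) (ord_lt_succ α) x
    exact ⟨z, hz⟩
  · -- back
    intro k u v hr y
    obtain ⟨z, hz⟩ := bfT_snoc_challenge (hα _ _ _ hr (α+1)) (ord_lt_succ α) y
    exact ⟨z, symm _ _ hz⟩
  · exact hb

lemma rk_mem (L : Type) [LinearOrder L] [Countable L] {k : ℕ} (a b : Fin k → L)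
    (h : bfT (rk.{uu} L a) L L a b) : ∃ f : L ≃o L, ∀ i, f (a i) = b i := by
  have hmem := csInf_mem (rkSet_nonempty.{uu} L a)
  exact hmem b h

lemma rk_le (L : Type) [LinearOrder L] {k : ℕ} (a : Fin k → L) {β : Ordinal.{uu}}
    (h : ∀ b : Fin k → L, bfT β L L a b → ∃ f : L ≃o L, ∀ i, f (a i) = b i) :
    rk L a ≤ β :=
  csInf_le' h

lemma rk_lt_scottRank (L : Type) [LinearOrder L] {k : ℕ} (a : Fin k → L) :
    rk L a < scottRank.{uu} L := by
  have hne : {α : Ordinal.{uu} | ∀ (k : ℕ) (a : Fin k → L), rk L a < α}.Nonempty := by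
    refine ⟨(⨆ p : (Σ k : ℕ, Fin k → L), rk L p.2) + 1, fun k a => ?_⟩
    exact lt_of_le_of_lt
      (le_ciSup (Ordinal.bddAbove_range _) (⟨k, a⟩ : Σ k : ℕ, Fin k → L))
      (ord_lt_succ _)
  exact csInf_mem hne k a

lemma scottRank_le (L : Type) [LinearOrder L] {β : Ordinal.{uu}}
    (h : ∀ (k : ℕ) (a : Fin k → L), rk L a < β) : scottRank L ≤ β :=
  csInf_le' h

end Scott

section ExtractCombine

lemma bfT_atomic_lt {γ : Ordinal.{uu}} {X Y : Type} [LinearOrder X] [LinearOrder Y]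
    {k : ℕ} {p : Fin k → X} {q : Fin k → Y} (h : bfT γ X Y p q) (i j : Fin k) :
    p i < p j ↔ q i < q j := by
  simp only [lt_iff_le_not_ge, bfT_atomic h i j, bfT_atomic h j i]

lemma bfT_extract_lt : ∀ {γ : Ordinal.{uu}} {X : Type} [LinearOrder X] {n : ℕ}
    (p q : Fin n → X) (c' d' : X) (i0 : Fin n) (hp : p i0 = c') (hq : q i0 = d')
    (h : bfT γ X X p q) {m : ℕ} (u : Fin m → {x : X // x < c'}) (v : Fin m → {x : X // x < d'})
    (huv : ∀ i, ∃ j, ((u i : X) = p j ∧ (v i : X) = q j)),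
    bfT γ {x : X // x < c'} {x : X // x < d'} u v := by
  intro γ
  induction γ using Ordinal.induction with
  | _ γ IH =>
    intro X _ n p q c' d' i0 hp hq h m u v huv
    refine bfT_intro (fun i j => ?_) (fun γ' hγ' l d => ?_)
    · obtain ⟨ji, hui, hvi⟩ := huv i
      obtain ⟨jj, huj, hvj⟩ := huv j
      have hat := bfT_atomic h ji jj
      simp only [← Subtype.coe_le_coe, hui, huj, hvi, hvj]
      exact hat
    · set D : Fin l → X := fun i => (d i : X) with hD
      obtain ⟨r, hr⟩ := bfT_challenge h hγ' D
      have hrlt : ∀ j : Fin l, r j < c' := by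
        intro j
        have hlt := (bfT_atomic_lt hr (Fin.natAdd n j) (Fin.castAdd l i0)).mp ?_
        · rwa [Fin.append_right, Fin.append_left, hp] at hlt
        · rw [Fin.append_right, Fin.append_left, hq]; exact (d j).2
      refine ⟨fun j => ⟨r j, hrlt j⟩, ?_⟩
      apply IH γ' hγ' (Fin.append q D) (Fin.append p r) d' c' (Fin.castAdd l i0)
        (by rw [Fin.append_left, hq]) (by rw [Fin.append_left, hp]) hr
      intro i
      refine Fin.addCases (fun i₀ => ?_) (fun i₀ => ?_) i
      · obtain ⟨j₀, h1, h2⟩ := huv i₀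
        refine ⟨Fin.castAdd l j₀, ?_, ?_⟩
        · rw [Fin.append_left, Fin.append_left]; exact h2
        · rw [Fin.append_left, Fin.append_left]; exact h1
      · refine ⟨Fin.natAdd n i₀, ?_, ?_⟩
        · rw [Fin.append_right, Fin.append_right]
        · rw [Fin.append_right, Fin.append_right]

lemma bfT_extract_gt : ∀ {γ : Ordinal.{uu}} {X : Type} [LinearOrder X] {n : ℕ}
    (p q : Fin n → X) (c' d' : X) (i0 : Fin n) (hp : p i0 = c') (hq : q i0 = d')
    (h : bfT γ X X p q) {m : ℕ} (u : Fin m → {x : X // c' < x}) (v : Fin m → {x : X // d' < x})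
    (huv : ∀ i, ∃ j, ((u i : X) = p j ∧ (v i : X) = q j)),
    bfT γ {x : X // c' < x} {x : X // d' < x} u v := by
  intro γ
  induction γ using Ordinal.induction with
  | _ γ IH =>
    intro X _ n p q c' d' i0 hp hq h m u v huv
    refine bfT_intro (fun i j => ?_) (fun γ' hγ' l d => ?_)
    · obtain ⟨ji, hui, hvi⟩ := huv i
      obtain ⟨jj, huj, hvj⟩ := huv j
      have hat := bfT_atomic h ji jj
      simp only [← Subtype.coe_le_coe, hui, huj, hvi, hvj]
      exact hat
    · set D : Fin l → X := fun i => (d i : X) with hD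
      obtain ⟨r, hr⟩ := bfT_challenge h hγ' D
      have hrlt : ∀ j : Fin l, c' < r j := by
        intro j
        have hlt := (bfT_atomic_lt hr (Fin.castAdd l i0) (Fin.natAdd n j)).mp ?_
        · rwa [Fin.append_right, Fin.append_left, hp] at hlt
        · rw [Fin.append_right, Fin.append_left, hq]; exact (d j).2
      refine ⟨fun j => ⟨r j, hrlt j⟩, ?_⟩
      apply IH γ' hγ' (Fin.append q D) (Fin.append p r) d' c' (Fin.castAdd l i0)
        (by rw [Fin.append_left, hq]) (by rw [Fin.append_left, hp]) hr
      intro i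
      refine Fin.addCases (fun i₀ => ?_) (fun i₀ => ?_) i
      · obtain ⟨j₀, h1, h2⟩ := huv i₀
        refine ⟨Fin.castAdd l j₀, ?_, ?_⟩
        · rw [Fin.append_left, Fin.append_left]; exact h2
        · rw [Fin.append_left, Fin.append_left]; exact h1
      · refine ⟨Fin.natAdd n i₀, ?_, ?_⟩
        · rw [Fin.append_right, Fin.append_right]
        · rw [Fin.append_right, Fin.append_right]

private lemma combine_le_helper {X : Type} [LinearOrder X] {c' d' : X} {kb ka n : ℕ}
    {u : Fin kb → {x : X // x < c'}} {v : Fin kb → {x : X // x < d'}}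
    {w : Fin ka → {x : X // c' < x}} {z : Fin ka → {x : X // d' < x}}
    (hat1 : ∀ i j, (u i : X) ≤ u j ↔ (v i : X) ≤ v j)
    (hat2 : ∀ i j, (w i : X) ≤ w j ↔ (z i : X) ≤ z j)
    {p q : Fin n → X}
    (hcorr : ∀ i, (∃ j, p i = ↑(u j) ∧ q i = ↑(v j)) ∨ (p i = c' ∧ q i = d')
      ∨ (∃ j, p i = ↑(w j) ∧ q i = ↑(z j)))
    (i j : Fin n) (hle : p i ≤ p j) : q i ≤ q j := by
  rcases hcorr i with ⟨ji,hpi,hqi⟩|⟨hpi,hqi⟩|⟨ji,hpi,hqi⟩ <;>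
    rcases hcorr j with ⟨jj,hpj,hqj⟩|⟨hpj,hqj⟩|⟨jj,hpj,hqj⟩ <;>
      rw [hpi, hpj] at hle <;> rw [hqi, hqj] <;>
  first
    | exact Subtype.coe_le_coe.mpr ((hat1 ji jj).mp (Subtype.coe_le_coe.mp hle))
    | exact Subtype.coe_le_coe.mpr ((hat2 ji jj).mp (Subtype.coe_le_coe.mp hle))
    | exact (hat1 ji jj).mp hle
    | exact (hat2 ji jj).mp hle
    | exact le_of_lt (v ji).2
    | exact le_of_lt (z jj).2
    | exact le_of_lt (lt_trans (v ji).2 (z jj).2)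
    | exact le_rfl
    | exact absurd hle (not_le.mpr (u jj).2)
    | exact absurd hle (not_le.mpr (w ji).2)
    | exact absurd hle (not_le.mpr (lt_trans (u jj).2 (w ji).2))

lemma bfT_combine : ∀ {γ : Ordinal.{uu}} {X : Type} [LinearOrder X] {c' d' : X}
    {kb ka n : ℕ} {u : Fin kb → {x : X // x < c'}} {v : Fin kb → {x : X // x < d'}}
    {w : Fin ka → {x : X // c' < x}} {z : Fin ka → {x : X // d' < x}}
    (h1 : bfT γ {x : X // x < c'} {x : X // x < d'} u v)
    (h2 : bfT γ {x : X // c' < x} {x : X // d' < x} w z)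
    (p : Fin n → X) (q : Fin n → X)
    (hcorr : ∀ i, (∃ j, p i = ↑(u j) ∧ q i = ↑(v j)) ∨ (p i = c' ∧ q i = d')
      ∨ (∃ j, p i = ↑(w j) ∧ q i = ↑(z j))),
    bfT γ X X p q := by
  intro γ
  induction γ using Ordinal.induction with
  | _ γ IH =>
    intro X _ c' d' kb ka n u v w z h1 h2 p q hcorr
    have hcorr' : ∀ i, (∃ j, q i = ↑(v j) ∧ p i = ↑(u j)) ∨ (q i = d' ∧ p i = c')
        ∨ (∃ j, q i = ↑(z j) ∧ p i = ↑(w j)) := by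
      intro i
      rcases hcorr i with ⟨j,ha,hb⟩|⟨ha,hb⟩|⟨j,ha,hb⟩
      exacts [Or.inl ⟨j, hb, ha⟩, Or.inr (Or.inl ⟨hb, ha⟩), Or.inr (Or.inr ⟨j, hb, ha⟩)]
    refine bfT_intro (fun i j => ?_) (fun γ' hγ' l D => ?_)
    · constructor
      · exact combine_le_helper (fun i j => Subtype.coe_le_coe.symm.trans
            ((bfT_atomic h1 i j).trans Subtype.coe_le_coe))
          (fun i j => Subtype.coe_le_coe.symm.trans
            ((bfT_atomic h2 i j).trans Subtype.coe_le_coe)) hcorr i j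
      · exact combine_le_helper (fun i j => Subtype.coe_le_coe.symm.trans
            (((bfT_atomic h1 i j).symm).trans Subtype.coe_le_coe))
          (fun i j => Subtype.coe_le_coe.symm.trans
            (((bfT_atomic h2 i j).symm).trans Subtype.coe_le_coe)) hcorr' i j
    · -- challenge
      have hbelow : ∃ (lb : ℕ) (db : Fin lb → {x : X // x < d'})
          (jb : ∀ i : Fin l, D i < d' → Fin lb),
          ∀ i (h : D i < d'), (db (jb i h) : X) = D i := by
        by_cases hb : ∃ i, D i < d'
        · obtain ⟨i₀, hi₀⟩ := hb
          refine ⟨l, fun i => if h : D i < d' then ⟨D i, h⟩ else ⟨D i₀, hi₀⟩,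
            fun i _ => i, fun i h => ?_⟩
          simp [h]
        · exact ⟨0, Fin.elim0, fun i h => (hb ⟨i, h⟩).elim, fun i h => (hb ⟨i, h⟩).elim⟩
      have habove : ∃ (la : ℕ) (da : Fin la → {x : X // d' < x})
          (ja : ∀ i : Fin l, d' < D i → Fin la),
          ∀ i (h : d' < D i), (da (ja i h) : X) = D i := by
        by_cases hb : ∃ i, d' < D i
        · obtain ⟨i₀, hi₀⟩ := hb
          refine ⟨l, fun i => if h : d' < D i then ⟨D i, h⟩ else ⟨D i₀, hi₀⟩,
            fun i _ => i, fun i h => ?_⟩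
          simp [h]
        · exact ⟨0, Fin.elim0, fun i h => (hb ⟨i, h⟩).elim, fun i h => (hb ⟨i, h⟩).elim⟩
      obtain ⟨lb, db, jb, hjb⟩ := hbelow
      obtain ⟨la, da, ja, hja⟩ := habove
      obtain ⟨rb, hrb⟩ := bfT_challenge h1 hγ' db
      obtain ⟨ra, hra⟩ := bfT_challenge h2 hγ' da
      set C : Fin l → X := fun i =>
        if hlt : D i < d' then ↑(rb (jb i hlt))
        else if hgt : d' < D i then ↑(ra (ja i hgt)) else c' with hC
      refine ⟨C, ?_⟩
      apply IH γ' hγ' hrb hra (Fin.append q D) (Fin.append p C)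
      intro i
      refine Fin.addCases (fun i₀ => ?_) (fun i₀ => ?_) i
      · rcases hcorr' i₀ with ⟨j,ha,hb⟩|⟨ha,hb⟩|⟨j,ha,hb⟩
        · refine Or.inl ⟨Fin.castAdd lb j, ?_, ?_⟩
          · rw [Fin.append_left, Fin.append_left]; exact ha
          · rw [Fin.append_left, Fin.append_left]; exact hb
        · exact Or.inr (Or.inl ⟨by rw [Fin.append_left]; exact ha,
            by rw [Fin.append_left]; exact hb⟩)
        · refine Or.inr (Or.inr ⟨Fin.castAdd la j, ?_, ?_⟩)
          · rw [Fin.append_left, Fin.append_left]; exact ha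
          · rw [Fin.append_left, Fin.append_left]; exact hb
      · rcases lt_trichotomy (D i₀) d' with hlt | heq | hgt
        · refine Or.inl ⟨Fin.natAdd kb (jb i₀ hlt), ?_, ?_⟩
          · rw [Fin.append_right, Fin.append_right]
            exact (hjb i₀ hlt).symm
          · rw [Fin.append_right, Fin.append_right]
            show C i₀ = _
            rw [hC]
            simp only []
            rw [dif_pos hlt]
        · refine Or.inr (Or.inl ⟨?_, ?_⟩)
          · rw [Fin.append_right]; exact heq
          · rw [Fin.append_right]
            show C i₀ = c'
            rw [hC]
            simp only []
            rw [dif_neg (by rw [heq]; exact lt_irrefl d'),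
              dif_neg (by rw [heq]; exact lt_irrefl d')]
        · refine Or.inr (Or.inr ⟨Fin.natAdd ka (ja i₀ hgt), ?_, ?_⟩)
          · rw [Fin.append_right, Fin.append_right]
            exact (hja i₀ hgt).symm
          · rw [Fin.append_right, Fin.append_right]
            show C i₀ = _
            rw [hC]
            simp only []
            rw [dif_neg (not_lt.mpr (le_of_lt hgt)), dif_pos hgt]

end ExtractCombine

section Glue

variable {X : Type} [LinearOrder X]

/-- Glue isomorphisms of the lower and upper cones at `c`/`e` to an automorphism. -/
lemma glue_iso (c e : X)
    (F1 : {x : X // x < c} ≃o {x : X // x < e}) (F2 : {x : X // c < x} ≃o {x : X // e < x}) :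
    ∃ G : X ≃o X, (∀ x (h : x < c), G x = ↑(F1 ⟨x, h⟩)) ∧ G c = e ∧
      (∀ x (h : c < x), G x = ↑(F2 ⟨x, h⟩)) := by
  classical
  set G0 : X → X := fun x =>
    if h : x < c then ↑(F1 ⟨x, h⟩) else if h' : c < x then ↑(F2 ⟨x, h'⟩) else e with hG0
  have hmid : ∀ x, ¬ (x < c) → ¬ (c < x) → x = c := by
    intro x h1 h2; exact le_antisymm (not_lt.mp h2) (not_lt.mp h1)
  have hGlt : ∀ x (h : x < c), G0 x = ↑(F1 ⟨x, h⟩) := by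
    intro x h; simp only [hG0, dif_pos h]
  have hGc : G0 c = e := by
    simp only [hG0, dif_neg (lt_irrefl c)]
  have hGgt : ∀ x (h : c < x), G0 x = ↑(F2 ⟨x, h⟩) := by
    intro x h
    simp only [hG0, dif_neg (not_lt.mpr (le_of_lt h)), dif_pos h]
  have hmono : StrictMono G0 := by
    intro x y hxy
    rcases lt_trichotomy x c with hx | hx | hx
    · rw [hGlt x hx]
      rcases lt_trichotomy y c with hy | hy | hy
      · rw [hGlt y hy]
        exact Subtype.coe_lt_coe.mpr (F1.strictMono (Subtype.mk_lt_mk.mpr hxy))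
      · rw [hy, hGc]; exact (F1 ⟨x, hx⟩).2
      · rw [hGgt y hy]
        exact lt_trans (F1 ⟨x, hx⟩).2 (F2 ⟨y, hy⟩).2
    · subst hx
      have hy : x < y := hxy
      rw [hGc, hGgt y hy]
      exact (F2 ⟨y, hy⟩).2
    · have hy : c < y := lt_trans hx hxy
      rw [hGgt x hx, hGgt y hy]
      exact Subtype.coe_lt_coe.mpr (F2.strictMono (Subtype.mk_lt_mk.mpr hxy))
  have hsurj : Function.Surjective G0 := by
    intro z
    rcases lt_trichotomy z e with hz | hz | hz
    · refine ⟨↑(F1.symm ⟨z, hz⟩), ?_⟩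
      rw [hGlt _ (F1.symm ⟨z, hz⟩).2, Subtype.coe_eta, OrderIso.apply_symm_apply]
    · exact ⟨c, by rw [hGc, hz]⟩
    · refine ⟨↑(F2.symm ⟨z, hz⟩), ?_⟩
      rw [hGgt _ (F2.symm ⟨z, hz⟩).2, Subtype.coe_eta, OrderIso.apply_symm_apply]
  refine ⟨StrictMono.orderIsoOfSurjective G0 hmono hsurj, ?_, ?_, ?_⟩ <;>
    simp only [StrictMono.coe_orderIsoOfSurjective]
  · exact hGlt
  · exact hGc
  · exact hGgt

/-- Restrict an automorphism fixing `c` to the lower cone. -/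
def restrictLT (G : X ≃o X) (c : X) (hc : G c = c) :
    {x : X // x < c} ≃o {x : X // x < c} where
  toFun w := ⟨G w, by
    have h2 : G ↑w < G c := (OrderIso.lt_iff_lt G).mpr w.2
    rwa [hc] at h2⟩
  invFun w := ⟨G.symm w, by
    have hsymm : G.symm c = c := G.injective (by rw [OrderIso.apply_symm_apply, hc])
    have h2 : G.symm ↑w < G.symm c := (OrderIso.lt_iff_lt G.symm).mpr w.2
    rwa [hsymm] at h2⟩
  left_inv w := by ext; simp
  right_inv w := by ext; simp
  map_rel_iff' := by
    intro w w'
    simp [Subtype.mk_le_mk, ← Subtype.coe_le_coe]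

/-- Transport the rank-homogeneity property along an order isomorphism. -/
lemma star_transport {A M : Type} [LinearOrder A] [LinearOrder M] [Countable A]
    (φ : A ≃o M) (k : ℕ) (u v : Fin k → M)
    (h : bfT (rk.{uu} A (fun i => φ.symm (u i))) M M u v) :
    ∃ g : M ≃o M, ∀ i, g (u i) = v i := by
  have h' := bfT_congr φ.symm φ.symm h
  obtain ⟨g, hg⟩ := rk_mem.{uu} A _ _ h'
  refine ⟨(φ.symm.trans g).trans φ, fun i => ?_⟩
  show φ (g (φ.symm (u i))) = v i
  have := hg i
  simp only [Function.comp_apply] at this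
  rw [this]
  simp

end Glue

section SumSpecific

variable {A B : Type} [LinearOrder A] [LinearOrder B]

def midc : A ⊕ₗ Unit ⊕ₗ B := toLex (Sum.inr (toLex (Sum.inl ())))

def embA : A → A ⊕ₗ Unit ⊕ₗ B := fun a => toLex (Sum.inl a)

def embB : B → A ⊕ₗ Unit ⊕ₗ B := fun b => toLex (Sum.inr (toLex (Sum.inr b)))

lemma embA_lt_midc (a : A) : embA (B := B) a < midc := Sum.Lex.inl_lt_inr _ _

lemma midc_lt_embB (b : B) : midc < embB (A := A) b := by
  have : toLex (Sum.inl ()) < toLex (Sum.inr b) := Sum.Lex.inl_lt_inr _ _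
  exact Sum.Lex.inr_lt_inr_iff.mpr this

lemma lt_midc_iff {x : A ⊕ₗ Unit ⊕ₗ B} : x < midc ↔ ∃ a, x = embA a := by
  constructor
  · intro h
    rcases x with a | u
    · exact ⟨a, rfl⟩
    · rcases u with u | b
      · cases u; exact absurd h (lt_irrefl _)
      · exfalso
        exact absurd h (not_lt.mpr (le_of_lt (midc_lt_embB b)))
  · rintro ⟨a, rfl⟩; exact embA_lt_midc a

lemma midc_lt_iff {x : A ⊕ₗ Unit ⊕ₗ B} : midc < x ↔ ∃ b, x = embB b := by
  constructor
  · intro h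
    rcases x with a | u
    · exact absurd h (not_lt.mpr (le_of_lt (embA_lt_midc a)))
    · rcases u with u | b
      · cases u; exact absurd h (lt_irrefl _)
      · exact ⟨b, rfl⟩
  · rintro ⟨b, rfl⟩; exact midc_lt_embB b

lemma embA_strictMono : StrictMono (embA (A := A) (B := B)) := by
  intro a1 a2 h
  exact Sum.Lex.inl_lt_inl_iff.mpr h

lemma embB_strictMono : StrictMono (embB (A := A) (B := B)) := by
  intro b1 b2 h
  exact Sum.Lex.inr_lt_inr_iff.mpr (Sum.Lex.inr_lt_inr_iff.mpr h)

noncomputable def isoA : A ≃o {x : A ⊕ₗ Unit ⊕ₗ B // x < midc} :=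
  StrictMono.orderIsoOfSurjective (fun a => ⟨embA a, embA_lt_midc a⟩)
    (fun a1 a2 h => Subtype.mk_lt_mk.mpr (embA_strictMono h))
    (by rintro ⟨x, hx⟩
        obtain ⟨a, rfl⟩ := lt_midc_iff.mp hx
        exact ⟨a, rfl⟩)

noncomputable def isoB : B ≃o {x : A ⊕ₗ Unit ⊕ₗ B // midc < x} :=
  StrictMono.orderIsoOfSurjective (fun b => ⟨embB b, midc_lt_embB b⟩)
    (fun b1 b2 h => Subtype.mk_lt_mk.mpr (embB_strictMono h))
    (by rintro ⟨x, hx⟩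
        obtain ⟨b, rfl⟩ := midc_lt_iff.mp hx
        exact ⟨b, rfl⟩)

lemma isoA_coe (a : A) : (↑(isoA (B := B) a) : A ⊕ₗ Unit ⊕ₗ B) = embA a := by
  simp [isoA]
  rfl

lemma isoB_coe (b : B) : (↑(isoB (A := A) b) : A ⊕ₗ Unit ⊕ₗ B) = embB b := by
  simp [isoB]
  rfl

end SumSpecific

def restrictGT {X : Type} [LinearOrder X] (G : X ≃o X) (c : X) (hc : G c = c) :
    {x : X // c < x} ≃o {x : X // c < x} where
  toFun w := ⟨G w, by
    have h2 : G c < G ↑w := (OrderIso.lt_iff_lt G).mpr w.2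
    rwa [hc] at h2⟩
  invFun w := ⟨G.symm w, by
    have hsymm : G.symm c = c := G.injective (by rw [OrderIso.apply_symm_apply, hc])
    have h2 : G.symm c < G.symm ↑w := (OrderIso.lt_iff_lt G.symm).mpr w.2
    rwa [hsymm] at h2⟩
  left_inv w := by ext; simp
  right_inv w := by ext; simp
  map_rel_iff' := by
    intro w w'
    simp [Subtype.mk_le_mk, ← Subtype.coe_le_coe]

section Main

variable {A B : Type} [LinearOrder A] [LinearOrder B]

lemma ord12 (μ : Ordinal.{uu}) : μ + 1 < μ + 2 := by
  have h : (1:Ordinal.{uu}) < 2 := by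
    have := Order.lt_succ (1:Ordinal.{uu})
    rwa [← Ordinal.add_one_eq_succ, one_add_one_eq_two] at this
  exact (add_lt_add_iff_left μ).mpr h

lemma ord23 (μ : Ordinal.{uu}) : μ + 2 < μ + 3 := by
  have h : (2:Ordinal.{uu}) < 3 := by
    have := Order.lt_succ (2:Ordinal.{uu})
    rwa [← Ordinal.add_one_eq_succ, two_add_one_eq_three] at this
  exact (add_lt_add_iff_left μ).mpr h

set_option maxHeartbeats 2000000 in
lemma upper_core [Countable A] [Countable B]
    {k : ℕ} (t s : Fin k → A ⊕ₗ Unit ⊕ₗ B)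
    (hs : bfT (max (scottRank.{uu} A) (scottRank.{uu} B) + 2)
      (A ⊕ₗ Unit ⊕ₗ B) (A ⊕ₗ Unit ⊕ₗ B) t s) :
    ∃ f : (A ⊕ₗ Unit ⊕ₗ B) ≃o (A ⊕ₗ Unit ⊕ₗ B), ∀ i, f (t i) = s i := by
  classical
  haveI : Countable (A ⊕ₗ Unit ⊕ₗ B) := inferInstanceAs (Countable (A ⊕ (Unit ⊕ B)))
  obtain ⟨e, P, Q, hPQ, hPs, hPlast, hQt, hQlast⟩ :
      ∃ (e : A ⊕ₗ Unit ⊕ₗ B) (P Q : Fin (k+1) → A ⊕ₗ Unit ⊕ₗ B),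
        bfT (max (scottRank.{uu} A) (scottRank.{uu} B) + 1)
          (A ⊕ₗ Unit ⊕ₗ B) (A ⊕ₗ Unit ⊕ₗ B) P Q ∧
        (∀ i, P (Fin.castSucc i) = s i) ∧ P (Fin.last k) = midc ∧
        (∀ i, Q (Fin.castSucc i) = t i) ∧ Q (Fin.last k) = e := by
    obtain ⟨E, hE⟩ := bfT_challenge hs (ord12 _) (fun _ : Fin 1 => midc)
    have hc0 : E = fun _ : Fin 1 => E 0 := by funext i; rw [Subsingleton.elim i 0]
    rw [hc0, ← snoc_eq_append, ← snoc_eq_append] at hE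
    exact ⟨E 0, _, _, hE, fun i => by simp, by simp, fun i => by simp, by simp⟩
  have hQlt : ∀ j, P j < midc → Q j < e := by
    intro j hj
    have := (bfT_atomic_lt hPQ j (Fin.last k)).mp (by rwa [hPlast])
    rwa [hQlast] at this
  have hQgt : ∀ j, midc < P j → e < Q j := by
    intro j hj
    have := (bfT_atomic_lt hPQ (Fin.last k) j).mp (by rwa [hPlast])
    rwa [hQlast] at this
  have hQeq : ∀ j, P j = midc → Q j = e := by
    intro j hj
    have h1 := (bfT_atomic hPQ j (Fin.last k)).mp (le_of_eq (hj.trans hPlast.symm))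
    have h2 := (bfT_atomic hPQ (Fin.last k) j).mp (le_of_eq (hPlast.trans hj.symm))
    rw [hQlast] at h1 h2
    exact le_antisymm h1 h2
  obtain ⟨F1, hF1p⟩ : ∃ F1 : {x : A ⊕ₗ Unit ⊕ₗ B // x < midc} ≃o {x : A ⊕ₗ Unit ⊕ₗ B // x < e},
      ∀ j (h : P j < midc), F1 ⟨P j, h⟩ = ⟨Q j, hQlt j h⟩ := by
    have eqv1 := Fintype.equivFin {j : Fin (k+1) // P j < midc}
    have hbfb : bfT (max (scottRank.{uu} A) (scottRank.{uu} B) + 1)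
        {x : A ⊕ₗ Unit ⊕ₗ B // x < midc} {x : A ⊕ₗ Unit ⊕ₗ B // x < e}
        (fun i => ⟨P (eqv1.symm i).1, (eqv1.symm i).2⟩)
        (fun i => ⟨Q (eqv1.symm i).1, hQlt _ (eqv1.symm i).2⟩) :=
      bfT_extract_lt P Q midc e (Fin.last k) hPlast hQlast hPQ _ _
        (fun i => ⟨(eqv1.symm i).1, rfl, rfl⟩)
    obtain ⟨F1, hF1⟩ := cross_iso
      (fun k (u : Fin k → {x : A ⊕ₗ Unit ⊕ₗ B // x < midc}) =>
        rk.{uu} A (fun i => isoA.symm (u i)))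
      (fun k u => lt_of_lt_of_le (rk_lt_scottRank A _) (le_max_left _ _))
      (fun k u v h => star_transport isoA k u v h) hbfb
    refine ⟨F1, fun j h => ?_⟩
    have := hF1 (eqv1 ⟨j, h⟩)
    simpa using this
  obtain ⟨F2, hF2p⟩ : ∃ F2 : {x : A ⊕ₗ Unit ⊕ₗ B // midc < x} ≃o {x : A ⊕ₗ Unit ⊕ₗ B // e < x},
      ∀ j (h : midc < P j), F2 ⟨P j, h⟩ = ⟨Q j, hQgt j h⟩ := by
    have eqv2 := Fintype.equivFin {j : Fin (k+1) // midc < P j}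
    have hbfa : bfT (max (scottRank.{uu} A) (scottRank.{uu} B) + 1)
        {x : A ⊕ₗ Unit ⊕ₗ B // midc < x} {x : A ⊕ₗ Unit ⊕ₗ B // e < x}
        (fun i => ⟨P (eqv2.symm i).1, (eqv2.symm i).2⟩)
        (fun i => ⟨Q (eqv2.symm i).1, hQgt _ (eqv2.symm i).2⟩) :=
      bfT_extract_gt P Q midc e (Fin.last k) hPlast hQlast hPQ _ _
        (fun i => ⟨(eqv2.symm i).1, rfl, rfl⟩)
    obtain ⟨F2, hF2⟩ := cross_iso
      (fun k (u : Fin k → {x : A ⊕ₗ Unit ⊕ₗ B // midc < x}) =>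
        rk.{uu} B (fun i => isoB.symm (u i)))
      (fun k u => lt_of_lt_of_le (rk_lt_scottRank B _) (le_max_right _ _))
      (fun k u v h => star_transport isoB k u v h) hbfa
    refine ⟨F2, fun j h => ?_⟩
    have := hF2 (eqv2 ⟨j, h⟩)
    simpa using this
  obtain ⟨G, hG1, hGc, hG2⟩ := glue_iso midc e F1 F2
  have hGP : ∀ j, G (P j) = Q j := by
    intro j
    rcases lt_trichotomy (P j) midc with h | h | h
    · rw [hG1 _ h, hF1p j h]
    · rw [h, hGc, (hQeq j h).symm]
    · rw [hG2 _ h, hF2p j h]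
  refine ⟨G.symm, fun i => ?_⟩
  have hgi := hGP (Fin.castSucc i)
  have h2 : G.symm (Q (Fin.castSucc i)) = P (Fin.castSucc i) := by
    rw [← hgi]; simp
  rw [hPs, hQt] at h2
  exact h2

set_option maxHeartbeats 2000000 in
lemma lower_core [Countable A] [Countable B] {k : ℕ} (a : Fin k → A) :
    rk.{uu} A a < scottRank.{uu} (A ⊕ₗ Unit ⊕ₗ B) := by
  classical
  haveI : Countable (A ⊕ₗ Unit ⊕ₗ B) := inferInstanceAs (Countable (A ⊕ (Unit ⊕ B)))
  refine lt_of_le_of_lt ?_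
    (rk_lt_scottRank (A ⊕ₗ Unit ⊕ₗ B) (Fin.snoc (fun i => embA (a i)) midc))
  apply rk_le
  intro b hb
  have h1 := bfT_congr (isoA (B := B)) (isoA (B := B)) hb
  have h2 : bfT (rk.{uu} (A ⊕ₗ Unit ⊕ₗ B) (Fin.snoc (fun i => embA (a i)) midc))
      {x : A ⊕ₗ Unit ⊕ₗ B // midc < x} {x : A ⊕ₗ Unit ⊕ₗ B // midc < x}
      Fin.elim0 Fin.elim0 := bfT_refl Fin.elim0
  have hlift := bfT_combine h1 h2
    (Fin.snoc (fun i => embA (a i)) midc) (Fin.snoc (fun i => embA (b i)) midc) ?_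
  · obtain ⟨F, hF⟩ := rk_mem (A ⊕ₗ Unit ⊕ₗ B) _ _ hlift
    have hFc : F midc = midc := by
      have := hF (Fin.last k)
      simpa using this
    refine ⟨(isoA.trans (restrictLT F midc hFc)).trans isoA.symm, fun i => ?_⟩
    have hstep : restrictLT F midc hFc (isoA (a i)) = isoA (b i) := by
      refine Subtype.ext ?_
      have hval : (restrictLT F midc hFc (isoA (a i))).1 = F (isoA (a i)).1 := rfl
      rw [hval, show ((isoA (B := B) (a i)).1) = embA (a i) from isoA_coe _,
        show ((isoA (B := B) (b i)).1) = embA (b i) from isoA_coe _]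
      have := hF (Fin.castSucc i)
      simpa using this
    show isoA.symm (restrictLT F midc hFc (isoA (a i))) = b i
    rw [hstep]
    simp
  · intro i
    refine Fin.lastCases ?_ (fun i₀ => ?_) i
    · exact Or.inr (Or.inl ⟨by simp, by simp⟩)
    · refine Or.inl ⟨i₀, ?_, ?_⟩
      · simp [isoA_coe]
      · simp [isoA_coe]

set_option maxHeartbeats 2000000 in
lemma lower_coreB [Countable A] [Countable B] {k : ℕ} (a : Fin k → B) :
    rk.{uu} B a < scottRank.{uu} (A ⊕ₗ Unit ⊕ₗ B) := by
  classical
  haveI : Countable (A ⊕ₗ Unit ⊕ₗ B) := inferInstanceAs (Countable (A ⊕ (Unit ⊕ B)))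
  refine lt_of_le_of_lt ?_
    (rk_lt_scottRank (A ⊕ₗ Unit ⊕ₗ B) (Fin.snoc (fun i => embB (a i)) midc))
  apply rk_le
  intro b hb
  have h1 := bfT_congr (isoB (A := A)) (isoB (A := A)) hb
  have h2 : bfT (rk.{uu} (A ⊕ₗ Unit ⊕ₗ B) (Fin.snoc (fun i => embB (a i)) midc))
      {x : A ⊕ₗ Unit ⊕ₗ B // x < midc} {x : A ⊕ₗ Unit ⊕ₗ B // x < midc}
      Fin.elim0 Fin.elim0 := bfT_refl Fin.elim0
  have hlift := bfT_combine h2 h1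
    (Fin.snoc (fun i => embB (a i)) midc) (Fin.snoc (fun i => embB (b i)) midc) ?_
  · obtain ⟨F, hF⟩ := rk_mem (A ⊕ₗ Unit ⊕ₗ B) _ _ hlift
    have hFc : F midc = midc := by
      have := hF (Fin.last k)
      simpa using this
    refine ⟨(isoB.trans (restrictGT F midc hFc)).trans isoB.symm, fun i => ?_⟩
    have hstep : restrictGT F midc hFc (isoB (a i)) = isoB (b i) := by
      refine Subtype.ext ?_
      have hval : (restrictGT F midc hFc (isoB (a i))).1 = F (isoB (a i)).1 := rfl
      rw [hval, show ((isoB (A := A) (a i)).1) = embB (a i) from isoB_coe _,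
        show ((isoB (A := A) (b i)).1) = embB (b i) from isoB_coe _]
      have := hF (Fin.castSucc i)
      simpa using this
    show isoB.symm (restrictGT F midc hFc (isoB (a i))) = b i
    rw [hstep]
    simp
  · intro i
    refine Fin.lastCases ?_ (fun i₀ => ?_) i
    · exact Or.inr (Or.inl ⟨by simp, by simp⟩)
    · refine Or.inr (Or.inr ⟨i₀, ?_, ?_⟩)
      · simp [isoB_coe]
      · simp [isoB_coe]

end Main

/-- For countable linear orders `A`, `B`:
`max (SR A) (SR B) ≤ SR (A + 1 + B) ≤ max (SR A) (SR B) + 3`. -/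
theorem scottRank_sum_one (A B : Type) [LinearOrder A] [LinearOrder B]
    [Countable A] [Countable B] :
    max (scottRank A) (scottRank B) ≤ scottRank (A ⊕ₗ Unit ⊕ₗ B) ∧
    scottRank (A ⊕ₗ Unit ⊕ₗ B) ≤ max (scottRank A) (scottRank B) + 3 := by
  constructor
  · refine max_le ?_ ?_
    · exact scottRank_le A (fun k a => lower_core a)
    · exact scottRank_le B (fun k a => lower_coreB a)
  · apply scottRank_le
    intro k t
    refine lt_of_le_of_lt (rk_le _ _ ?_) (ord23 _)
    intro s hs
    exact upper_core t s hs
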